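/- arXiv:math/0603143 — 3 statements merged into one kernel-verified Lean document; each statement's English description precedes it below -/
import Mathlib

section
/- Let N be a positive integer, h and α elements of (1/N)ℤ, and work in the ring ℝ[x₂^{1/N}, x₂^{−1/N}][[x₀]] with the convention that (x₂+x₀)^β = ∑_{j≥0} C(β,j) x₂^{β−j} x₀^j. Then ∑_{i≥0} C(h,i) x₂^{α(h−i)} ((x₂+x₀)^α − x₂^α)^i = (x₂+x₀)^{αh}; that is, substituting z₀ = (x₂+x₀)^α − x₂^α (expanded in powers of x₀) into the binomial expansion of (x₂^α + z₀)^h yields (x₂+x₀)^{αh}. -/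
/-- The generalized binomial coefficient `C(α, m) = α(α−1)⋯(α−m+1)/m!`. -/
noncomputable def qchoose (α : ℚ) (m : ℕ) : ℚ :=
  (∏ i ∈ Finset.range m, (α - i)) / (Nat.factorial m)

/-- The series `x₂^{-β}·(x₂+x₀)^β = ∑_{j≥0} C(β,j) x₂^{−j} x₀^j`, modeled as a power series
in `x₀` with coefficients in `ℝ[x₂^{-1}]`, where `Polynomial.X` plays the role of `x₂^{-1}`. -/
noncomputable def binomialSeriesQ (β : ℚ) : PowerSeries (Polynomial ℝ) :=
  PowerSeries.mk fun j => (qchoose β j : ℝ) • Polynomial.X ^ j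

namespace Stmt2Aux

open Finset Polynomial

lemma descPochhammer_eval_prod (α : ℚ) (n : ℕ) :
    (descPochhammer ℚ n).eval α = ∏ i ∈ range n, (α - i) := by
  induction n with
  | zero => simp
  | succ n ih => rw [descPochhammer_succ_right, prod_range_succ, ← ih]; simp

lemma qchoose_eq_ringChoose (α : ℚ) (n : ℕ) : qchoose α n = Ring.choose α n := by
  have h := Ring.descPochhammer_eq_factorial_smul_choose (R := ℚ) α n
  have hs : (descPochhammer ℤ n).smeval α = (descPochhammer ℚ n).eval α := by
    rw [Polynomial.descPochhammer_smeval_eq_ascPochhammer,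
      Polynomial.ascPochhammer_smeval_eq_eval, descPochhammer_eval_eq_ascPochhammer]
  rw [hs, descPochhammer_eval_prod] at h
  have hfac : ((Nat.factorial n : ℕ) : ℚ) ≠ 0 := by exact_mod_cast Nat.factorial_ne_zero n
  rw [qchoose, h, nsmul_eq_mul]
  field_simp

lemma qchoose_natCast (m k : ℕ) : qchoose (m : ℚ) k = Nat.choose m k := by
  rw [qchoose_eq_ringChoose, Ring.choose_natCast]

/-- The scalar binomial series over ℚ. -/
noncomputable def qSeries (β : ℚ) : PowerSeries ℚ := PowerSeries.mk fun j => qchoose β j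

lemma qSeries_mul (β γ : ℚ) : qSeries β * qSeries γ = qSeries (β + γ) := by
  ext n
  rw [PowerSeries.coeff_mul]
  simp only [qSeries, PowerSeries.coeff_mk, qchoose_eq_ringChoose]
  exact (Ring.add_choose_eq n (Commute.all β γ)).symm

lemma qSeries_zero : qSeries 0 = 1 := by
  ext n
  cases n with
  | zero => simp [qSeries, qchoose]
  | succ n => simp [qSeries, qchoose, Finset.prod_range_succ', PowerSeries.coeff_one]

lemma qSeries_pow (β : ℚ) (m : ℕ) : qSeries β ^ m = qSeries (m * β) := by
  induction m with
  | zero => simp [qSeries_zero]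
  | succ m ih =>
      rw [pow_succ, ih, qSeries_mul]
      push_cast
      ring_nf

lemma coeff_pow_eq_zero {f : PowerSeries ℚ} (hf : PowerSeries.constantCoeff f = 0)
    {n i : ℕ} (h : n < i) : PowerSeries.coeff n (f ^ i) = 0 := by
  have hX : PowerSeries.X ∣ f := PowerSeries.X_dvd_iff.mpr hf
  have : (PowerSeries.X : PowerSeries ℚ) ^ i ∣ f ^ i := pow_dvd_pow_of_dvd hX i
  exact PowerSeries.X_pow_dvd_iff.mp this n h

/-- The polynomial whose evaluation gives `qchoose`. -/
noncomputable def qp (k : ℕ) : Polynomial ℚ :=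
  Polynomial.C ((Nat.factorial k : ℚ)⁻¹) * ∏ i ∈ range k, (Polynomial.X - Polynomial.C (i : ℚ))

lemma qp_eval (k : ℕ) (t : ℚ) : (qp k).eval t = qchoose t k := by
  simp [qp, qchoose, eval_prod, div_eq_mul_inv, mul_comm]

lemma poly_eq_of_nat_eval {p q : Polynomial ℚ}
    (h : ∀ m : ℕ, p.eval (m : ℚ) = q.eval (m : ℚ)) : p = q := by
  refine Polynomial.eq_of_infinite_eval_eq p q ?_
  refine Set.Infinite.mono ?_ (Set.infinite_range_of_injective (Nat.cast_injective (R := ℚ)))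
  rintro x ⟨m, rfl⟩
  exact h m

lemma key (α h : ℚ) (n : ℕ) :
    ∑ i ∈ range (n + 1), qchoose h i * PowerSeries.coeff n ((qSeries α - 1) ^ i)
      = qchoose (α * h) n := by
  set f := qSeries α - 1 with hf_def
  have hf : PowerSeries.constantCoeff f = 0 := by
    simp [hf_def, qSeries, qchoose, ← PowerSeries.coeff_zero_eq_constantCoeff]
  have hnat : ∀ m : ℕ,
      ∑ i ∈ range (n + 1), qchoose (m : ℚ) i * PowerSeries.coeff n (f ^ i)
        = qchoose (α * m) n := by
    intro m
    have h1 : ∑ i ∈ range (n + 1), qchoose (m : ℚ) i * PowerSeries.coeff n (f ^ i)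
        = ∑ i ∈ range (m + 1), qchoose (m : ℚ) i * PowerSeries.coeff n (f ^ i) := by
      rcases le_total n m with hnm | hmn
      · refine Finset.sum_subset (by simp [Nat.succ_le_succ hnm]) ?_
        intro i _ hi
        simp only [Finset.mem_range, not_lt] at hi
        rw [coeff_pow_eq_zero hf (lt_of_lt_of_le (Nat.lt_succ_self n) hi), mul_zero]
      · refine (Finset.sum_subset (by simp [Nat.succ_le_succ hmn]) ?_).symm
        intro i _ hi
        simp only [Finset.mem_range, not_lt] at hi
        rw [qchoose_natCast, Nat.choose_eq_zero_of_lt (lt_of_lt_of_le (Nat.lt_succ_self m) hi)]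
        simp
    rw [h1]
    have h2 : (f + 1) ^ m = ∑ i ∈ range (m + 1), f ^ i * (Nat.choose m i : PowerSeries ℚ) := by
      simpa using add_pow f 1 m
    have h3 : f + 1 = qSeries α := by rw [hf_def]; ring
    have h4 : PowerSeries.coeff n ((f + 1) ^ m) = qchoose (α * m) n := by
      rw [h3, qSeries_pow]
      simp [qSeries, mul_comm]
    rw [← h4, h2, map_sum]
    refine Finset.sum_congr rfl fun i _ => ?_
    rw [qchoose_natCast, ← map_natCast (PowerSeries.C (R := ℚ)) (Nat.choose m i), mul_comm (f ^ i),
      PowerSeries.coeff_C_mul]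
  -- polynomial argument in `h`
  let P : Polynomial ℚ :=
    ∑ i ∈ range (n + 1), Polynomial.C (PowerSeries.coeff n (f ^ i)) * qp i
  let Q : Polynomial ℚ := (qp n).comp (Polynomial.C α * Polynomial.X)
  have hP : ∀ t : ℚ, P.eval t
      = ∑ i ∈ range (n + 1), qchoose t i * PowerSeries.coeff n (f ^ i) := by
    intro t
    simp [P, eval_finset_sum, qp_eval, mul_comm]
  have hQ : ∀ t : ℚ, Q.eval t = qchoose (α * t) n := by
    intro t
    simp [Q, eval_comp, qp_eval]
  have hPQ : P = Q := poly_eq_of_nat_eval fun m => by rw [hP, hQ]; exact hnat m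
  rw [← hP h, hPQ, hQ h]

/-- Transfer homomorphism from scalar series to the series over `ℝ[x₂⁻¹]`. -/
noncomputable def Phi : PowerSeries ℚ →+* PowerSeries (Polynomial ℝ) :=
  (PowerSeries.rescale (Polynomial.X : Polynomial ℝ)).comp
    (PowerSeries.map (algebraMap ℚ (Polynomial ℝ)))

lemma coeff_Phi (f : PowerSeries ℚ) (n : ℕ) :
    PowerSeries.coeff (R := Polynomial ℝ) n (Phi f)
      = ((PowerSeries.coeff n f : ℚ) : ℝ) • (Polynomial.X : Polynomial ℝ) ^ n := by
  rw [Phi, RingHom.comp_apply, PowerSeries.coeff_rescale, PowerSeries.coeff_map,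
    Polynomial.smul_eq_C_mul, mul_comm]
  congr 1

lemma binomialSeriesQ_eq_Phi (β : ℚ) : binomialSeriesQ β = Phi (qSeries β) := by
  ext n
  rw [coeff_Phi]
  simp [binomialSeriesQ, qSeries]

lemma coeff_real_smul (r : ℝ) (f : PowerSeries (Polynomial ℝ)) (n : ℕ) :
    PowerSeries.coeff (R := Polynomial ℝ) n (r • f) = r • PowerSeries.coeff (R := Polynomial ℝ) n f := by
  simp

end Stmt2Aux

open Stmt2Aux Finset

/-- For `h, α ∈ (1/N)ℤ` one has
`∑_{i≥0} C(h,i) x₂^{α(h−i)} ((x₂+x₀)^α − x₂^α)^i = (x₂+x₀)^{αh}`.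
After factoring out `x₂^{αh}` this reads
`∑_{i≥0} C(h,i) (x₂^{-α}(x₂+x₀)^α − 1)^i = x₂^{-αh}(x₂+x₀)^{αh}`;
since `x₂^{-α}(x₂+x₀)^α − 1` is divisible by `x₀`, the coefficient of `x₀^n` of the
left-hand side receives contributions only from `i ≤ n`, and the identity is stated
coefficientwise. -/
theorem stmt_2 (N : ℕ) (hN : 0 < N) (α h : ℚ) (a b : ℤ)
    (hα : α = (a : ℚ) / N) (hh : h = (b : ℚ) / N) (n : ℕ) :
    PowerSeries.coeff (R := Polynomial ℝ) n
        (∑ i ∈ Finset.range (n + 1),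
          (qchoose h i : ℝ) • (binomialSeriesQ α - 1) ^ i) =
      PowerSeries.coeff (R := Polynomial ℝ) n (binomialSeriesQ (α * h)) := by
  have hc : ∀ i : ℕ, PowerSeries.coeff (R := Polynomial ℝ) n ((binomialSeriesQ α - 1) ^ i)
      = ((PowerSeries.coeff n ((qSeries α - 1) ^ i) : ℚ) : ℝ)
          • (Polynomial.X : Polynomial ℝ) ^ n := by
    intro i
    rw [binomialSeriesQ_eq_Phi,
      show Phi (qSeries α) - 1 = Phi (qSeries α - 1) by rw [map_sub, map_one],
      ← map_pow, coeff_Phi]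
  rw [map_sum]
  calc
    ∑ i ∈ Finset.range (n + 1),
        PowerSeries.coeff (R := Polynomial ℝ) n ((qchoose h i : ℝ) • (binomialSeriesQ α - 1) ^ i)
      = ∑ i ∈ Finset.range (n + 1),
          ((qchoose h i * PowerSeries.coeff n ((qSeries α - 1) ^ i) : ℚ) : ℝ)
            • (Polynomial.X : Polynomial ℝ) ^ n := by
        refine Finset.sum_congr rfl fun i _ => ?_
        rw [coeff_real_smul, hc i, smul_smul]
        push_cast
        ring_nf
    _ = ((qchoose (α * h) n : ℚ) : ℝ) • (Polynomial.X : Polynomial ℝ) ^ n := by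
        rw [← Finset.sum_smul]
        congr 1
        rw [← Rat.cast_sum]
        exact_mod_cast congrArg (fun q : ℚ => (q : ℝ)) (key α h n)
    _ = PowerSeries.coeff (R := Polynomial ℝ) n (binomialSeriesQ (α * h)) := by
        simp [binomialSeriesQ]
end

section
/- Let k be a positive integer, let p(x₀,x) = x₀^k + x·q(x₀,x) with q a polynomial, let h(x₀,x) be a polynomial, and let α ∈ ℚ. Define z^α|_{z=p, x₀≫x} := ∑_{i≥0} C(α,i) x₀^{k(α−i)} (x q(x₀,x))^i ∈ ℝ[x₀, x₀^{−1}][[x]] (interpreting x₀^{kα} formally via a root of x₀ if needed). Then z^α|_{z = p + x·h, x₀≫x} = ∑_{j≥0} C(α,j) (z₀^{α−j}|_{z₀ = p, x₀≫x}) (x·h(x₀,x))^j; in other words, the substitution z = p + x h into z^α agrees with first expanding (z₀ + x h)^α binomially and then substituting z₀ = p. -/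
open scoped LaurentPolynomial

/-- Embedding of two-variable polynomials `ℝ[x₀][x]` into `ℝ[x₀,x₀⁻¹][[x]]`. -/
noncomputable def toSeries (p : Polynomial (Polynomial ℝ)) :
    PowerSeries (LaurentPolynomial ℝ) :=
  ((p.map Polynomial.toLaurent : Polynomial (LaurentPolynomial ℝ)) :
    PowerSeries (LaurentPolynomial ℝ))

/-- The expansion `x₀^{-kα}·(z^α|_{z = x₀^k + x q, x₀ ≫ x}) = ∑_i C(α,i) x₀^{−ki} (x q)^i`,
an element of `ℝ[x₀,x₀⁻¹][[x]]` (here `LaurentPolynomial.T` plays the role of powers of `x₀`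
and `PowerSeries.X` the role of `x`); since the `i`-th term is divisible by `x^i`, the sum is
defined coefficientwise. -/
noncomputable def subExpansion (k : ℕ) (q : PowerSeries (LaurentPolynomial ℝ)) (α : ℚ) :
    PowerSeries (LaurentPolynomial ℝ) :=
  PowerSeries.mk fun n =>
    PowerSeries.coeff (R := LaurentPolynomial ℝ) n
      (∑ i ∈ Finset.range (n + 1),
        (qchoose α i : ℝ) •
          (PowerSeries.C (R := LaurentPolynomial ℝ) (LaurentPolynomial.T (-(k * i : ℤ))) *
            (PowerSeries.X * q) ^ i))

section Aux
open PowerSeries Finset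

local notation "AA" => LaurentPolynomial ℝ

lemma my_coeff_smul (r : ℝ) (φ : PowerSeries AA) (n : ℕ) :
    PowerSeries.coeff (R := AA) n (r • φ) = r • PowerSeries.coeff (R := AA) n φ := rfl

lemma trunc_mul {S S' : PowerSeries AA} (F : PowerSeries AA) (n : ℕ)
    (h : ∀ m ≤ n, PowerSeries.coeff (R := AA) m S = PowerSeries.coeff (R := AA) m S') :
    PowerSeries.coeff (R := AA) n (S * F) = PowerSeries.coeff (R := AA) n (S' * F) := by
  rw [PowerSeries.coeff_mul, PowerSeries.coeff_mul]
  refine Finset.sum_congr rfl fun p hp => ?_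
  rw [Finset.HasAntidiagonal.mem_antidiagonal] at hp
  rw [h p.1 (by omega)]

lemma qchoose_mul (α : ℚ) (a b : ℕ) :
    qchoose α b * qchoose (α - b) a = qchoose α (a + b) * ((a + b).choose a) := by
  unfold qchoose
  rw [add_comm a b, Finset.prod_range_add, Nat.cast_choose ℚ (Nat.le_add_left a b)]
  have h1 : ∀ i ∈ Finset.range a, (α - ((b + i : ℕ) : ℚ)) = (α - b) - i := by
    intro i _; push_cast; ring
  rw [Finset.prod_congr rfl h1, Nat.add_sub_cancel]
  have hb : ((b.factorial : ℚ)) ≠ 0 := Nat.cast_ne_zero.2 (Nat.factorial_ne_zero b)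
  have ha : ((a.factorial : ℚ)) ≠ 0 := Nat.cast_ne_zero.2 (Nat.factorial_ne_zero a)
  have hab : (((b + a).factorial : ℚ)) ≠ 0 := Nat.cast_ne_zero.2 (Nat.factorial_ne_zero _)
  field_simp

lemma triangle_sum {M : Type*} [AddCommMonoid M] (n : ℕ) (e : ℕ → ℕ → M)
    (he : ∀ a b, n < a + b → e a b = 0) :
    ∑ i ∈ Finset.range (n + 1), ∑ j ∈ Finset.range (i + 1), e j (i - j) =
      ∑ a ∈ Finset.range (n + 1), ∑ b ∈ Finset.range (n + 1), e a b := by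
  have h1 : (∑ i ∈ Finset.range (n + 1), ∑ j ∈ Finset.range (i + 1), e j (i - j))
      = ∑ j ∈ Finset.range (n + 1), ∑ i ∈ Finset.Ico j (n + 1), e j (i - j) := by
    simp only [Finset.range_eq_Ico]
    exact (Finset.sum_Ico_Ico_comm 0 (n + 1) (fun x y => e x (y - x))).symm
  rw [h1]
  refine Finset.sum_congr rfl fun a ha => ?_
  rw [Finset.sum_Ico_eq_sum_range]
  simp only [Nat.add_sub_cancel_left]
  rw [Finset.mem_range] at ha
  refine Finset.sum_subset (Finset.range_subset_range.2 (by omega)) fun b hb hnb => ?_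
  rw [Finset.mem_range] at *
  exact he a b (by omega)

lemma subExpansion_coeff_trunc (k : ℕ) (Q : PowerSeries AA) (β : ℚ) {m n : ℕ} (h : m ≤ n) :
    PowerSeries.coeff (R := AA) m (subExpansion k Q β) =
      PowerSeries.coeff (R := AA) m
        (∑ i ∈ Finset.range (n + 1),
          (qchoose β i : ℝ) •
            (PowerSeries.C (R := AA) (LaurentPolynomial.T (-(k * i : ℤ))) * (X * Q) ^ i)) := by
  simp only [subExpansion, PowerSeries.coeff_mk]
  rw [map_sum, map_sum]
  refine Finset.sum_subset (Finset.range_subset_range.2 (by omega)) fun i hi hni => ?_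
  rw [Finset.mem_range] at hi hni
  have hmi : m < i := by omega
  rw [my_coeff_smul, PowerSeries.coeff_C_mul]
  have hd : (X : PowerSeries AA) ^ i ∣ (X * Q) ^ i := ⟨Q ^ i, by ring⟩
  rw [PowerSeries.X_pow_dvd_iff.mp hd m hmi]
  simp

/-- For `p(x₀,x) = x₀^k + x·q(x₀,x)` (`k ≥ 1`), a polynomial `h(x₀,x)` and `α ∈ ℚ`,
`z^α|_{z = p + x·h, x₀ ≫ x} = ∑_{j≥0} C(α,j) (z₀^{α−j}|_{z₀ = p, x₀ ≫ x}) (x·h)^j`: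
after factoring out the formal power `x₀^{kα}` from both sides, the substitution of
`z = p + x h` into `z^α` agrees with first expanding `(z₀ + x h)^α` binomially and then
substituting `z₀ = p`.  The right-hand infinite sum over `j` is again defined
coefficientwise (its `j`-th term is divisible by `x^j`). -/
theorem stmt_3 (k : ℕ) (hk : 1 ≤ k) (q h : Polynomial (Polynomial ℝ)) (α : ℚ) :
    subExpansion k (toSeries q + toSeries h) α =
      PowerSeries.mk fun n =>
        PowerSeries.coeff (R := LaurentPolynomial ℝ) n
          (∑ j ∈ Finset.range (n + 1),
            (qchoose α j : ℝ) •
              (PowerSeries.C (R := LaurentPolynomial ℝ) (LaurentPolynomial.T (-(k * j : ℤ))) *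
                subExpansion k (toSeries q) (α - j) *
                (PowerSeries.X * toSeries h) ^ j)) := by
  refine PowerSeries.ext fun n => ?_
  set Q := toSeries q with hQdef
  set H := toSeries h with hHdef
  rw [subExpansion, PowerSeries.coeff_mk, PowerSeries.coeff_mk, map_sum, map_sum]
  set t : ℕ → ℕ → AA := fun a b =>
    LaurentPolynomial.T (-(k * (a + b) : ℤ)) *
      PowerSeries.coeff (R := AA) n ((X * Q) ^ a * (X * H) ^ b) with ht
  set e : ℕ → ℕ → AA := fun a b =>
    ((qchoose α (a + b) * ((a + b).choose a) : ℚ) : ℝ) • t a b with he_def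
  have e_eq : ∀ a b, e a b = ((qchoose α (a + b) * ((a + b).choose a) : ℚ) : ℝ) •
      (LaurentPolynomial.T (-(k * (a + b) : ℤ)) *
        PowerSeries.coeff (R := AA) n ((X * Q) ^ a * (X * H) ^ b)) := fun a b => rfl
  have he : ∀ a b, n < a + b → e a b = 0 := by
    intro a b hab
    have hd : (X : PowerSeries AA) ^ (a + b) ∣ (X * Q) ^ a * (X * H) ^ b :=
      ⟨Q ^ a * H ^ b, by rw [mul_pow, mul_pow, pow_add]; ring⟩
    have h0 := PowerSeries.X_pow_dvd_iff.mp hd n hab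
    simp [he_def, ht, h0]
  -- LHS
  have hL : ∀ i ∈ Finset.range (n + 1),
      PowerSeries.coeff (R := AA) n ((qchoose α i : ℝ) •
        (PowerSeries.C (R := AA) (LaurentPolynomial.T (-(k * i : ℤ))) * (X * (Q + H)) ^ i)) =
      ∑ j ∈ Finset.range (i + 1), e j (i - j) := by
    intro i hi
    rw [my_coeff_smul, mul_add X Q H, add_pow, Finset.mul_sum, map_sum, Finset.smul_sum]
    refine Finset.sum_congr rfl fun j hj => ?_
    rw [Finset.mem_range] at hj
    have hji : j ≤ i := by omega
    have hij : j + (i - j) = i := by omega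
    rw [PowerSeries.coeff_C_mul]
    rw [← map_natCast (PowerSeries.C (R := AA)) (i.choose j), PowerSeries.coeff_mul_C]
    have hz : ((j : ℤ) + ((i - j : ℕ) : ℤ)) = (i : ℤ) := by omega
    rw [e_eq j (i - j), hij, hz]
    simp only [Algebra.smul_def, Rat.cast_mul, Rat.cast_natCast, map_mul, map_natCast]
    ring
  rw [Finset.sum_congr rfl hL, triangle_sum n e he]
  -- RHS
  have hR : ∀ b ∈ Finset.range (n + 1),
      PowerSeries.coeff (R := AA) n ((qchoose α b : ℝ) •
        (PowerSeries.C (R := AA) (LaurentPolynomial.T (-(k * b : ℤ))) * subExpansion k Q (α - b) *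
          (X * H) ^ b)) =
      ∑ a ∈ Finset.range (n + 1), e a b := by
    intro b hb
    rw [my_coeff_smul]
    have hre : PowerSeries.C (R := AA) (LaurentPolynomial.T (-(k * b : ℤ))) * subExpansion k Q (α - b) *
        (X * H) ^ b = subExpansion k Q (α - b) *
          (PowerSeries.C (R := AA) (LaurentPolynomial.T (-(k * b : ℤ))) * (X * H) ^ b) := by ring
    rw [hre, trunc_mul _ n (fun m hm => subExpansion_coeff_trunc k Q (α - b) hm),
      Finset.sum_mul, map_sum, Finset.smul_sum]
    refine Finset.sum_congr rfl fun a ha => ?_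
    rw [smul_mul_assoc, my_coeff_smul]
    have hT : (LaurentPolynomial.T (-(k * a : ℤ)) : AA) * LaurentPolynomial.T (-(k * b : ℤ))
        = LaurentPolynomial.T (-(k * (a + b) : ℤ)) := by
      rw [← LaurentPolynomial.T_add]; congr 1; push_cast; ring
    have hmul : PowerSeries.C (R := AA) (LaurentPolynomial.T (-(k * a : ℤ))) * (X * Q) ^ a *
        (PowerSeries.C (R := AA) (LaurentPolynomial.T (-(k * b : ℤ))) * (X * H) ^ b)
        = PowerSeries.C (R := AA) (LaurentPolynomial.T (-(k * (a + b) : ℤ))) *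
          ((X * Q) ^ a * (X * H) ^ b) := by
      rw [show PowerSeries.C (R := AA) (LaurentPolynomial.T (-(k * a : ℤ))) * (X * Q) ^ a *
          (PowerSeries.C (R := AA) (LaurentPolynomial.T (-(k * b : ℤ))) * (X * H) ^ b)
          = (PowerSeries.C (R := AA) (LaurentPolynomial.T (-(k * a : ℤ))) *
            PowerSeries.C (R := AA) (LaurentPolynomial.T (-(k * b : ℤ)))) *
            ((X * Q) ^ a * (X * H) ^ b) from by ring, ← map_mul, hT]
    rw [hmul, PowerSeries.coeff_C_mul, e_eq a b, smul_smul, ← Rat.cast_mul, qchoose_mul]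
  rw [Finset.sum_congr rfl hR, Finset.sum_comm]
end Aux
end

section
/- Let V be a ℤ-graded vector space with operators L(0), L(n) (n≥1) as above, N a positive integer, a_n ∈ ℂ scalars, and define Δ_N(x) = exp(∑_{n≥1} a_n x^{−n/N} L(n)) N^{−L(0)} x^{(1/N−1)L(0)} ∈ Hom(V, V[x^{1/N}, x^{−1/N}]). Then Δ_N(x^N)^{−1} = (N x^{N−1})^{L(0)} exp(−∑_{n≥1} a_n x^{−n} L(n)); i.e., the inverse of Δ_N evaluated at x^N is given by this closed formula. -/
section

variable {V : Type*} [AddCommGroup V] [Module ℂ V]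

/-- The coefficient of `x^{−m}` in `exp(∑_{n≥1} b_n x^{−n} L(n))`:
`∑_k (1/k!) ∑_{n_1+⋯+n_k=m, n_i≥1} b_{n_1}⋯b_{n_k} L(n_1)∘⋯∘L(n_k)`,
a finite sum over compositions of `m`. -/
noncomputable def expCoeff (b : ℕ → ℂ) (L : ℕ → Module.End ℂ V) (m : ℕ) :
    Module.End ℂ V :=
  ∑ c : Composition m,
    (((c.blocks.map b).prod) / (c.length.factorial : ℂ)) • (c.blocks.map L).prod

/-- The coefficient of `x^j` in `Φ(x) = (N x^{N−1})^{L(0)} exp(−∑_{n≥1} a_n x^{−n} L(n))`. -/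
noncomputable def phiCoeff (π : ℤ → Module.End ℂ V) (L : ℕ → Module.End ℂ V)
    (a : ℕ → ℂ) (N : ℕ) (j : ℤ) (v : V) : V :=
  ∑ᶠ p : ℕ × ℤ,
    if ((N : ℤ) - 1) * p.2 - (N : ℤ) * p.1 = j then
      ((N : ℂ) ^ (p.2 - (p.1 : ℤ))) • (expCoeff (fun n => -a n) L p.1) (π p.2 v)
    else 0

/-- The coefficient of `x^j` in
`Δ_N(x^N) = exp(∑_{n≥1} a_n x^{−n} L(n)) N^{−L(0)} x^{(1−N)L(0)}`:
a homogeneous `v` of degree `d` is first multiplied by `N^{−d} x^{(1−N)d}` and then the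
exponential contributes `∑_m x^{−m} E_m`, for a total power `x^{(1−N)d − m}`. -/
noncomputable def deltaNCoeff (π : ℤ → Module.End ℂ V) (L : ℕ → Module.End ℂ V)
    (a : ℕ → ℂ) (N : ℕ) (j : ℤ) (v : V) : V :=
  ∑ᶠ p : ℕ × ℤ,
    if (1 - (N : ℤ)) * p.2 - (p.1 : ℤ) = j then
      ((N : ℂ) ^ (-p.2)) • (expCoeff a L p.1) (π p.2 v)
    else 0

end

open Finset Function

section Aux
variable {V : Type*} [AddCommGroup V] [Module ℂ V]

private def comps (m : ℕ) : Finset (List ℕ) :=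
  (Finset.univ : Finset (Composition m)).image Composition.blocks

private lemma mem_comps {m : ℕ} {l : List ℕ} :
    l ∈ comps m ↔ l.sum = m ∧ ∀ i ∈ l, 0 < i := by
  constructor
  · intro h
    rw [comps, Finset.mem_image] at h
    obtain ⟨c, -, rfl⟩ := h
    exact ⟨c.blocks_sum, fun i hi => c.blocks_pos hi⟩
  · rintro ⟨h1, h2⟩
    exact Finset.mem_image.2 ⟨⟨l, fun {i} hi => h2 i hi, h1⟩, Finset.mem_univ _, rfl⟩

private lemma expCoeff_eq (b : ℕ → ℂ) (L : ℕ → Module.End ℂ V) (m : ℕ) :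
    expCoeff b L m = ∑ l ∈ comps m,
      (((l.map b).prod) / (l.length.factorial : ℂ)) • (l.map L).prod := by
  rw [comps, Finset.sum_image (fun c _ c' _ h => Composition.ext h)]
  rfl

private lemma comps_zero : comps 0 = {([] : List ℕ)} := by
  ext l
  simp only [mem_comps, Finset.mem_singleton]
  constructor
  · rintro ⟨h1, h2⟩
    cases l with
    | nil => rfl
    | cons a t =>
      exfalso
      have := h2 a (by simp)
      simp only [List.sum_cons] at h1
      omega
  · rintro rfl; simp

private lemma expCoeff_zero (b : ℕ → ℂ) (L : ℕ → Module.End ℂ V) :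
    expCoeff b L 0 = 1 := by
  rw [expCoeff_eq, comps_zero]
  simp

end Aux

private lemma alt_sum (K : ℕ) (hK : 0 < K) :
    ∑ k ∈ Finset.range (K + 1),
      ((-1 : ℂ)) ^ (K - k) / ((k.factorial : ℂ) * ((K - k).factorial : ℂ)) = 0 := by
  have key : ∑ k ∈ Finset.range (K + 1), (1 : ℂ) ^ k * (-1) ^ (K - k) * (K.choose k) = 0 := by
    rw [← add_pow]
    simp [zero_pow hK.ne']
  have step : ∀ k ∈ Finset.range (K + 1),
      ((-1 : ℂ)) ^ (K - k) / ((k.factorial : ℂ) * ((K - k).factorial : ℂ))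
        = (1 : ℂ) ^ k * (-1) ^ (K - k) * (K.choose k) / (K.factorial : ℂ) := by
    intro k hk
    rw [Finset.mem_range] at hk
    have hkK : k ≤ K := by omega
    have hfact : (k.factorial * (K - k).factorial * (K.choose k) : ℕ) = K.factorial := by
      have h := Nat.choose_mul_factorial_mul_factorial hkK
      calc k.factorial * (K - k).factorial * K.choose k
          = K.choose k * k.factorial * (K - k).factorial := by ring
        _ = K.factorial := h
    have h1 : ((k.factorial : ℂ)) ≠ 0 := Nat.cast_ne_zero.2 (Nat.factorial_ne_zero _)
    have h2 : (((K - k).factorial : ℂ)) ≠ 0 := Nat.cast_ne_zero.2 (Nat.factorial_ne_zero _)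
    have h3 : ((K.factorial : ℂ)) ≠ 0 := Nat.cast_ne_zero.2 (Nat.factorial_ne_zero _)
    have hfc : ((k.factorial : ℂ)) * (((K - k).factorial : ℂ)) * ((K.choose k : ℕ) : ℂ)
        = (K.factorial : ℂ) := by
      push_cast [← hfact]; ring
    field_simp
    rw [← hfc]; ring
  rw [Finset.sum_congr rfl step, ← Finset.sum_div, key, zero_div]

private lemma prod_map_neg (f : ℕ → ℂ) (l : List ℕ) :
    (l.map (fun x => -f x)).prod = (-1 : ℂ) ^ l.length * (l.map f).prod := by
  induction l with
  | nil => simp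
  | cons a t ih => simp [ih, pow_succ]; ring

section Conv
variable {V : Type*} [AddCommGroup V] [Module ℂ V]

private lemma expConv (L : ℕ → Module.End ℂ V) (b : ℕ → ℂ) (m : ℕ) :
    ∑ k ∈ Finset.range (m + 1),
      expCoeff b L (m - k) * expCoeff (fun n => -b n) L k
      = if m = 0 then (1 : Module.End ℂ V) else 0 := by
  by_cases hm : m = 0
  · subst hm; simp [expCoeff_zero]
  rw [if_neg hm]
  set b' : ℕ → ℂ := fun n => -b n with hb'
  set g : List ℕ × List ℕ → Module.End ℂ V := fun pr =>
    ((((pr.1.map b).prod) / (pr.1.length.factorial : ℂ)) *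
      (((pr.2.map b').prod) / (pr.2.length.factorial : ℂ))) • ((pr.1.map L).prod * (pr.2.map L).prod)
    with hg
  have step1 : ∑ k ∈ Finset.range (m + 1),
      expCoeff b L (m - k) * expCoeff b' L k
      = ∑ k ∈ Finset.range (m + 1), ∑ pr ∈ comps (m - k) ×ˢ comps k, g pr := by
    refine Finset.sum_congr rfl fun k _ => ?_
    rw [expCoeff_eq, expCoeff_eq, Finset.sum_mul_sum, Finset.sum_product]
    refine Finset.sum_congr rfl fun l1 _ => Finset.sum_congr rfl fun l2 _ => ?_
    rw [hg]
    dsimp only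
    rw [smul_mul_assoc, mul_smul_comm, smul_smul]
  -- combine into a biUnion
  set PS : Finset (List ℕ × List ℕ) :=
    (Finset.range (m + 1)).biUnion (fun k => comps (m - k) ×ˢ comps k) with hPS
  have hdisj : ∀ k1 ∈ (Finset.range (m+1) : Finset ℕ), ∀ k2 ∈ (Finset.range (m+1) : Finset ℕ),
      k1 ≠ k2 → Disjoint (comps (m - k1) ×ˢ comps k1) (comps (m - k2) ×ˢ comps k2) := by
    intro k1 _ k2 _ hne
    refine Finset.disjoint_left.2 ?_
    rintro ⟨l1, l2⟩ h1 h2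
    rw [Finset.mem_product] at h1 h2
    exact hne ((mem_comps.1 h1.2).1.symm.trans (mem_comps.1 h2.2).1)
  have step2 : ∑ k ∈ Finset.range (m + 1), ∑ pr ∈ comps (m - k) ×ˢ comps k, g pr
      = ∑ pr ∈ PS, g pr := (Finset.sum_biUnion hdisj).symm
  -- the target indexed set
  set SS : Finset (List ℕ × ℕ) :=
    (comps m).biUnion (fun l => {l} ×ˢ Finset.range (l.length + 1)) with hSS
  have mem_PS : ∀ pr : List ℕ × List ℕ, pr ∈ PS ↔
      (pr.1.sum + pr.2.sum = m ∧ (∀ i ∈ pr.1, 0 < i) ∧ (∀ i ∈ pr.2, 0 < i)) := by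
    rintro ⟨l1, l2⟩
    rw [hPS, Finset.mem_biUnion]
    constructor
    · rintro ⟨k, hk, hmem⟩
      rw [Finset.mem_product] at hmem
      obtain ⟨s1, p1⟩ := mem_comps.1 hmem.1
      obtain ⟨s2, p2⟩ := mem_comps.1 hmem.2
      rw [Finset.mem_range] at hk
      dsimp only at s1 s2 p1 p2 ⊢
      refine ⟨by omega, p1, p2⟩
    · rintro ⟨hsum, p1, p2⟩
      dsimp only at hsum p1 p2
      refine ⟨l2.sum, ?_, ?_⟩
      · rw [Finset.mem_range]; omega
      · rw [Finset.mem_product]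
        exact ⟨mem_comps.2 ⟨by dsimp only; omega, p1⟩, mem_comps.2 ⟨rfl, p2⟩⟩
  have mem_SS : ∀ z : List ℕ × ℕ, z ∈ SS ↔
      (z.1.sum = m ∧ (∀ i ∈ z.1, 0 < i) ∧ z.2 ≤ z.1.length) := by
    rintro ⟨l, k⟩
    rw [hSS, Finset.mem_biUnion]
    constructor
    · rintro ⟨l', hl', hmem⟩
      simp only [Finset.mem_product, Finset.mem_singleton, Finset.mem_range] at hmem
      obtain ⟨h', hk⟩ := hmem
      subst h'
      exact ⟨(mem_comps.1 hl').1, (mem_comps.1 hl').2, by dsimp only; omega⟩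
    · rintro ⟨h1, h2, h3⟩
      dsimp only at h1 h2 h3
      exact ⟨l, mem_comps.2 ⟨h1, h2⟩, by
        rw [Finset.mem_product, Finset.mem_singleton, Finset.mem_range]
        exact ⟨rfl, by omega⟩⟩
  have step3 : ∑ pr ∈ PS, g pr = ∑ z ∈ SS, g (z.1.take z.2, z.1.drop z.2) := by
    refine Finset.sum_nbij' (fun pr => (pr.1 ++ pr.2, pr.1.length))
      (fun z => (z.1.take z.2, z.1.drop z.2)) ?_ ?_ ?_ ?_ ?_
    · intro pr hpr
      obtain ⟨hsum, p1, p2⟩ := (mem_PS pr).1 hpr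
      refine (mem_SS _).2 ⟨by simp [List.sum_append, hsum], ?_, by simp⟩
      intro i hi
      rcases List.mem_append.1 hi with h | h
      · exact p1 i h
      · exact p2 i h
    · intro z hz
      obtain ⟨h1, h2, h3⟩ := (mem_SS z).1 hz
      refine (mem_PS _).2 ⟨?_, ?_, ?_⟩
      · dsimp only
        rw [← List.sum_append, List.take_append_drop, h1]
      · exact fun i hi => h2 i (List.take_subset _ _ hi)
      · exact fun i hi => h2 i (List.drop_subset _ _ hi)
    · intro pr _
      simp [List.take_left, List.drop_left]
    · intro z hz
      obtain ⟨h1, h2, h3⟩ := (mem_SS z).1 hz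
      dsimp only
      rw [List.take_append_drop]
      rw [Prod.ext_iff]
      refine ⟨rfl, ?_⟩
      dsimp only
      rw [List.length_take]
      omega
    · intro pr _
      dsimp only
      rw [List.take_left, List.drop_left]
  have step4 : ∑ z ∈ SS, g (z.1.take z.2, z.1.drop z.2)
      = ∑ l ∈ comps m, ∑ k ∈ Finset.range (l.length + 1), g (l.take k, l.drop k) := by
    rw [hSS, Finset.sum_biUnion]
    · refine Finset.sum_congr rfl fun l _ => ?_
      rw [Finset.sum_product, Finset.sum_singleton]
    · intro l1 _ l2 _ hne
      refine Finset.disjoint_left.2 ?_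
      rintro ⟨l, k⟩ h1 h2
      rw [Finset.mem_product, Finset.mem_singleton] at h1 h2
      exact hne (h1.1.symm.trans h2.1)
  rw [step1, step2, step3, step4]
  refine Finset.sum_eq_zero fun l hl => ?_
  obtain ⟨hsum, hpos⟩ := mem_comps.1 hl
  have hlen : 0 < l.length := by
    rcases l with _ | ⟨a, t⟩
    · exact absurd (by simpa using hsum.symm) hm
    · simp
  have hterm : ∀ k ∈ Finset.range (l.length + 1), g (l.take k, l.drop k)
      = (((-1 : ℂ)) ^ (l.length - k) / ((k.factorial : ℂ) * ((l.length - k).factorial : ℂ)))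
        • (((l.map b).prod) • (l.map L).prod) := by
    intro k hk
    rw [Finset.mem_range] at hk
    have hkl : k ≤ l.length := by omega
    rw [hg]
    dsimp only
    have e1 : (l.take k).length = k := by rw [List.length_take]; omega
    have e2 : (l.drop k).length = l.length - k := by rw [List.length_drop]
    have e3 : ((l.drop k).map b').prod = (-1 : ℂ) ^ (l.length - k) * ((l.drop k).map b).prod := by
      rw [hb', prod_map_neg, e2]
    have e4 : ((l.take k).map b).prod * ((l.drop k).map b).prod = (l.map b).prod := by
      rw [← List.prod_append, ← List.map_append, List.take_append_drop]
    have e5 : ((l.take k).map L).prod * ((l.drop k).map L).prod = (l.map L).prod := by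
      rw [← List.prod_append, ← List.map_append, List.take_append_drop]
    rw [e1, e2, e3, e5, smul_smul]
    congr 1
    rw [← e4]
    ring
  rw [Finset.sum_congr rfl hterm, ← Finset.sum_smul, alt_sum l.length hlen, zero_smul]

end Conv

section Homog
variable {V : Type*} [AddCommGroup V] [Module ℂ V]
variable {π : ℤ → Module.End ℂ V} {L : ℕ → Module.End ℂ V}

private lemma word_homog
    (hproj : ∀ d, π d * π d = π d)
    (hL : ∀ n : ℕ, 1 ≤ n → ∀ (d : ℤ) (v : V),
      π (d - (n : ℤ)) (L n (π d v)) = L n (π d v))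
    (l : List ℕ) (hl : ∀ i ∈ l, 0 < i) (d : ℤ) (v : V) :
    π (d - (l.sum : ℤ)) ((l.map L).prod (π d v)) = (l.map L).prod (π d v) := by
  induction l with
  | nil =>
    simp only [List.sum_nil, Nat.cast_zero, sub_zero, List.map_nil, List.prod_nil,
      Module.End.one_apply]
    have := congrArg (fun f => f v) (hproj d)
    simpa [Module.End.mul_apply] using this
  | cons n t ih =>
    have hn : 1 ≤ n := hl n (by simp)
    have ht : ∀ i ∈ t, 0 < i := fun i hi => hl i (by simp [hi])
    have ihw := ih ht
    simp only [List.map_cons, List.prod_cons, Module.End.mul_apply]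
    set w := (t.map L).prod (π d v) with hw
    have key := hL n hn (d - (t.sum : ℤ)) w
    rw [ihw] at key
    have harith : d - ((n :: t).sum : ℤ) = d - (t.sum : ℤ) - (n : ℤ) := by
      simp only [List.sum_cons]
      push_cast
      ring
    rw [harith]
    exact key

private lemma expCoeff_homog
    (hproj : ∀ d, π d * π d = π d)
    (hL : ∀ n : ℕ, 1 ≤ n → ∀ (d : ℤ) (v : V),
      π (d - (n : ℤ)) (L n (π d v)) = L n (π d v))
    (b : ℕ → ℂ) (m : ℕ) (d : ℤ) (v : V) :
    π (d - (m : ℤ)) (expCoeff b L m (π d v)) = expCoeff b L m (π d v) := by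
  rw [expCoeff_eq]
  rw [LinearMap.sum_apply, map_sum]
  refine Finset.sum_congr rfl fun l hl => ?_
  obtain ⟨h1, h2⟩ := mem_comps.1 hl
  rw [LinearMap.smul_apply, map_smul]
  congr 1
  rw [← h1]
  exact word_homog hproj hL l h2 d v

private lemma proj_expCoeff
    (hproj : ∀ d, π d * π d = π d)
    (hortho : ∀ d e, d ≠ e → π d * π e = 0)
    (hL : ∀ n : ℕ, 1 ≤ n → ∀ (d : ℤ) (v : V),
      π (d - (n : ℤ)) (L n (π d v)) = L n (π d v))
    (b : ℕ → ℂ) (m : ℕ) (d e : ℤ) (v : V) (he : e ≠ d - (m : ℤ)) :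
    π e (expCoeff b L m (π d v)) = 0 := by
  rw [← expCoeff_homog hproj hL b m d v]
  have := congrArg (fun f => f (expCoeff b L m (π d v))) (hortho e (d - (m : ℤ)) he)
  simpa [Module.End.mul_apply] using this

end Homog

section FinsumAux
variable {M : Type*} [AddCommMonoid M]

private lemma finsum_finsetSum_comm {ι κ : Type*} (s : Finset κ) (F : ι → κ → M)
    (h : ∀ k ∈ s, (Function.support fun i => F i k).Finite) :
    ∑ᶠ i, ∑ k ∈ s, F i k = ∑ k ∈ s, ∑ᶠ i, F i k := by
  classical
  induction s using Finset.cons_induction with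
  | empty => simp
  | cons a s ha ih =>
    simp only [Finset.sum_cons]
    have hsupp : (Function.support fun i => ∑ k ∈ s, F i k).Finite := by
      have : (Function.support fun i => ∑ k ∈ s, F i k) ⊆
          ⋃ k ∈ (s : Set κ), Function.support fun i => F i k := by
        intro i hi
        by_contra hmem
        simp only [Set.mem_iUnion, Function.mem_support, not_exists, not_not] at hmem
        exact hi (Finset.sum_eq_zero fun k hk => hmem k hk)
      exact Set.Finite.subset (Set.Finite.biUnion s.finite_toSet
        (fun k hk => h k (Finset.mem_cons_of_mem hk))) this
    rw [finsum_add_distrib (h a (Finset.mem_cons_self a s)) hsupp,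
      ih (fun k hk => h k (Finset.mem_cons_of_mem hk))]

end FinsumAux

section Single
variable {V : Type*} [AddCommGroup V] [Module ℂ V]
variable {π : ℤ → Module.End ℂ V} {L : ℕ → Module.End ℂ V} {a : ℕ → ℂ} {N : ℕ}

private lemma deltaN_zero (i : ℤ) : deltaNCoeff π L a N i (0 : V) = 0 := by
  rw [deltaNCoeff]
  have : ∀ p : ℕ × ℤ, (if (1 - (N : ℤ)) * p.2 - (p.1 : ℤ) = i then
      ((N : ℂ) ^ (-p.2)) • (expCoeff a L p.1) (π p.2 (0 : V)) else 0) = 0 := by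
    intro p; simp
  simp only [this, finsum_zero]

private lemma phi_zero (i : ℤ) : phiCoeff π L a N i (0 : V) = 0 := by
  rw [phiCoeff]
  have : ∀ p : ℕ × ℤ, (if ((N : ℤ) - 1) * p.2 - (N : ℤ) * p.1 = i then
      ((N : ℂ) ^ (p.2 - (p.1 : ℤ))) • (expCoeff (fun n => -a n) L p.1) (π p.2 (0 : V)) else 0)
        = 0 := by
    intro p; simp
  simp only [this, finsum_zero]

private lemma deltaN_add
    (hnil₂ : ∀ v : V, {p : ℕ × ℤ | (expCoeff a L p.1) (π p.2 v) ≠ 0}.Finite)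
    (i : ℤ) (u u' : V) :
    deltaNCoeff π L a N i (u + u') = deltaNCoeff π L a N i u + deltaNCoeff π L a N i u' := by
  rw [deltaNCoeff, deltaNCoeff, deltaNCoeff]
  have hfin : ∀ w : V, (Function.support fun p : ℕ × ℤ =>
      (if (1 - (N : ℤ)) * p.2 - (p.1 : ℤ) = i then
        ((N : ℂ) ^ (-p.2)) • (expCoeff a L p.1) (π p.2 w) else 0)).Finite := by
    intro w
    refine Set.Finite.subset (hnil₂ w) ?_
    intro p hp
    simp only [Function.mem_support] at hp
    simp only [Set.mem_setOf_eq]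
    intro h0
    apply hp
    rw [h0, smul_zero, ite_self]
  rw [← finsum_add_distrib (hfin u) (hfin u')]
  refine finsum_congr fun p => ?_
  by_cases h : (1 - (N : ℤ)) * p.2 - (p.1 : ℤ) = i <;>
    simp [h, map_add, smul_add]

private lemma phi_add
    (hnil₁ : ∀ v : V, {p : ℕ × ℤ | (expCoeff (fun n => -a n) L p.1) (π p.2 v) ≠ 0}.Finite)
    (i : ℤ) (u u' : V) :
    phiCoeff π L a N i (u + u') = phiCoeff π L a N i u + phiCoeff π L a N i u' := by
  rw [phiCoeff, phiCoeff, phiCoeff]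
  have hfin : ∀ w : V, (Function.support fun p : ℕ × ℤ =>
      (if ((N : ℤ) - 1) * p.2 - (N : ℤ) * p.1 = i then
        ((N : ℂ) ^ (p.2 - (p.1 : ℤ))) • (expCoeff (fun n => -a n) L p.1) (π p.2 w)
      else 0)).Finite := by
    intro w
    refine Set.Finite.subset (hnil₁ w) ?_
    intro p hp
    simp only [Function.mem_support] at hp
    simp only [Set.mem_setOf_eq]
    intro h0
    apply hp
    rw [h0, smul_zero, ite_self]
  rw [← finsum_add_distrib (hfin u) (hfin u')]
  refine finsum_congr fun p => ?_
  by_cases h : ((N : ℤ) - 1) * p.2 - (N : ℤ) * p.1 = i <;>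
    simp [h, map_add, smul_add]

private lemma deltaN_sum
    (hnil₂ : ∀ v : V, {p : ℕ × ℤ | (expCoeff a L p.1) (π p.2 v) ≠ 0}.Finite)
    (i : ℤ) {κ : Type*} (s : Finset κ) (w : κ → V) :
    deltaNCoeff π L a N i (∑ q ∈ s, w q) = ∑ q ∈ s, deltaNCoeff π L a N i (w q) := by
  classical
  induction s using Finset.cons_induction with
  | empty => simpa using deltaN_zero i
  | cons a' s ha ih =>
    rw [Finset.sum_cons, Finset.sum_cons, deltaN_add hnil₂, ih]

private lemma phi_sum
    (hnil₁ : ∀ v : V, {p : ℕ × ℤ | (expCoeff (fun n => -a n) L p.1) (π p.2 v) ≠ 0}.Finite)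
    (i : ℤ) {κ : Type*} (s : Finset κ) (w : κ → V) :
    phiCoeff π L a N i (∑ q ∈ s, w q) = ∑ q ∈ s, phiCoeff π L a N i (w q) := by
  classical
  induction s using Finset.cons_induction with
  | empty => simpa using phi_zero i
  | cons a' s ha ih =>
    rw [Finset.sum_cons, Finset.sum_cons, phi_add hnil₁, ih]

end Single

section Single2
variable {V : Type*} [AddCommGroup V] [Module ℂ V]
variable {π : ℤ → Module.End ℂ V} {L : ℕ → Module.End ℂ V} {a : ℕ → ℂ} {N : ℕ}

variable (hproj : ∀ d, π d * π d = π d)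
variable (hortho : ∀ d e, d ≠ e → π d * π e = 0)
variable (hL : ∀ n : ℕ, 1 ≤ n → ∀ (d : ℤ) (v : V),
      π (d - (n : ℤ)) (L n (π d v)) = L n (π d v))

include hproj hortho hL

private lemma deltaN_single (c : ℂ) (m : ℕ) (d i : ℤ) (v : V) (m' : ℕ)
    (hi : (1 - (N : ℤ)) * (d - (m : ℤ)) - (m' : ℤ) = i) :
    deltaNCoeff π L a N i (c • expCoeff (fun n => -a n) L m (π d v)) =
      (c * (N : ℂ) ^ ((m : ℤ) - d)) •
        expCoeff a L m' (expCoeff (fun n => -a n) L m (π d v)) := by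
  set u := expCoeff (fun n => -a n) L m (π d v) with hu
  have hhom2 : π (d - (m : ℤ)) u = u := expCoeff_homog hproj hL _ m d v
  have hhom : ∀ e : ℤ, e ≠ d - (m : ℤ) → π e u = 0 := fun e he =>
    proj_expCoeff hproj hortho hL _ m d e v he
  rw [deltaNCoeff]
  rw [finsum_eq_single _ ((m', d - (m : ℤ)) : ℕ × ℤ)]
  · rw [if_pos (by exact hi)]
    rw [map_smul, hhom2, map_smul, smul_smul]
    dsimp only
    congr 1
    rw [neg_sub]
    ring
  · rintro ⟨pm, pd⟩ hne
    by_cases hd : pd = d - (m : ℤ)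
    · subst hd
      have hpm : pm ≠ m' := by
        intro hpm
        exact hne (by rw [hpm])
      rw [if_neg]
      intro hcond
      dsimp only at hcond
      have : (pm : ℤ) = (m' : ℤ) := by linarith [hcond, hi]
      exact hpm (by exact_mod_cast this)
    · rw [map_smul, hhom pd hd, smul_zero, map_zero, smul_zero, ite_self]

private lemma deltaN_single_zero (c : ℂ) (m : ℕ) (d i : ℤ) (v : V)
    (h : ∀ m'' : ℕ, (1 - (N : ℤ)) * (d - (m : ℤ)) - (m'' : ℤ) ≠ i) :
    deltaNCoeff π L a N i (c • expCoeff (fun n => -a n) L m (π d v)) = 0 := by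
  set u := expCoeff (fun n => -a n) L m (π d v) with hu
  have hhom : ∀ e : ℤ, e ≠ d - (m : ℤ) → π e u = 0 := fun e he =>
    proj_expCoeff hproj hortho hL _ m d e v he
  rw [deltaNCoeff]
  refine finsum_eq_zero_of_forall_eq_zero ?_
  rintro ⟨pm, pd⟩
  by_cases hd : pd = d - (m : ℤ)
  · subst hd
    exact if_neg (h pm)
  · rw [map_smul, hhom pd hd, smul_zero, map_zero, smul_zero, ite_self]

private lemma phi_single (hN : 0 < N) (c : ℂ) (m : ℕ) (e i : ℤ) (v : V) (m' : ℕ)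
    (hi : ((N : ℤ) - 1) * (e - (m : ℤ)) - (N : ℤ) * (m' : ℤ) = i) :
    phiCoeff π L a N i (c • expCoeff a L m (π e v)) =
      (c * (N : ℂ) ^ ((e - (m : ℤ)) - (m' : ℤ))) •
        expCoeff (fun n => -a n) L m' (expCoeff a L m (π e v)) := by
  set u := expCoeff a L m (π e v) with hu
  have hhom2 : π (e - (m : ℤ)) u = u := expCoeff_homog hproj hL _ m e v
  have hhom : ∀ f : ℤ, f ≠ e - (m : ℤ) → π f u = 0 := fun f hf =>
    proj_expCoeff hproj hortho hL _ m e f v hf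
  rw [phiCoeff]
  rw [finsum_eq_single _ ((m', e - (m : ℤ)) : ℕ × ℤ)]
  · rw [if_pos (by exact hi)]
    rw [map_smul, hhom2, map_smul, smul_smul]
    dsimp only
    congr 1
    ring
  · rintro ⟨pm, pd⟩ hne
    by_cases hd : pd = e - (m : ℤ)
    · subst hd
      have hpm : pm ≠ m' := by
        intro hpm
        exact hne (by rw [hpm])
      rw [if_neg]
      intro hcond
      dsimp only at hcond
      have hNne : (N : ℤ) ≠ 0 := by exact_mod_cast hN.ne'
      have : (N : ℤ) * (pm : ℤ) = (N : ℤ) * (m' : ℤ) := by linarith [hcond, hi]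
      have : (pm : ℤ) = (m' : ℤ) := mul_left_cancel₀ hNne this
      exact hpm (by exact_mod_cast this)
    · rw [map_smul, hhom pd hd, smul_zero, map_zero, smul_zero, ite_self]

private lemma phi_single_zero (c : ℂ) (m : ℕ) (e i : ℤ) (v : V)
    (h : ∀ m'' : ℕ, ((N : ℤ) - 1) * (e - (m : ℤ)) - (N : ℤ) * (m'' : ℤ) ≠ i) :
    phiCoeff π L a N i (c • expCoeff a L m (π e v)) = 0 := by
  set u := expCoeff a L m (π e v) with hu
  have hhom : ∀ f : ℤ, f ≠ e - (m : ℤ) → π f u = 0 := fun f hf =>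
    proj_expCoeff hproj hortho hL _ m e f v hf
  rw [phiCoeff]
  refine finsum_eq_zero_of_forall_eq_zero ?_
  rintro ⟨pm, pd⟩
  by_cases hd : pd = e - (m : ℤ)
  · subst hd
    exact if_neg (h pm)
  · rw [map_smul, hhom pd hd, smul_zero, map_zero, smul_zero, ite_self]

end Single2

open Function in
/-- `Δ_N(x^N)^{−1} = (N x^{N−1})^{L(0)} exp(−∑_{n≥1} a_n x^{−n} L(n))`:
the series `Φ(x) = (N x^{N−1})^{L(0)} exp(−∑ a_n x^{−n} L(n))` is a two-sided inverse of
`Δ_N(x^N)`, i.e. both Cauchy products `Δ_N(x^N)·Φ(x)` and `Φ(x)·Δ_N(x^N)` are the identity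
(the coefficient of `x^j` of each product is `id` for `j = 0` and `0` otherwise). -/
theorem stmt_8 (V : Type*) [AddCommGroup V] [Module ℂ V]
    (π : ℤ → Module.End ℂ V)
    (hproj : ∀ d, π d * π d = π d)
    (hortho : ∀ d e, d ≠ e → π d * π e = 0)
    (hfin : ∀ v : V, (support fun d => π d v).Finite)
    (hsum : ∀ v : V, ∑ᶠ d, π d v = v)
    (L : ℕ → Module.End ℂ V)
    (hL : ∀ n : ℕ, 1 ≤ n → ∀ (d : ℤ) (v : V),
      π (d - (n : ℤ)) (L n (π d v)) = L n (π d v))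
    (a : ℕ → ℂ) (N : ℕ) (hN : 0 < N)
    (hnil₁ : ∀ v : V,
      {p : ℕ × ℤ | (expCoeff (fun n => -a n) L p.1) (π p.2 v) ≠ 0}.Finite)
    (hnil₂ : ∀ v : V, {p : ℕ × ℤ | (expCoeff a L p.1) (π p.2 v) ≠ 0}.Finite)
    (j : ℤ) (v : V) :
    (∑ᶠ i : ℤ, deltaNCoeff π L a N i (phiCoeff π L a N (j - i) v) =
        if j = 0 then v else 0) ∧
    (∑ᶠ i : ℤ, phiCoeff π L a N i (deltaNCoeff π L a N (j - i) v) =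
        if j = 0 then v else 0) := by
  classical
  constructor
  · -- Part 1 : Δ ∘ Φ
    set Q := (hnil₁ v).toFinset with hQdef
    have hphi : ∀ t : ℤ, phiCoeff π L a N t v = ∑ q ∈ Q,
        (if ((N : ℤ) - 1) * q.2 - (N : ℤ) * q.1 = t then
          ((N : ℂ) ^ (q.2 - (q.1 : ℤ))) • (expCoeff (fun n => -a n) L q.1) (π q.2 v)
        else 0) := by
      intro t
      rw [phiCoeff]
      refine finsum_eq_sum_of_support_subset _ ?_
      intro p hp
      simp only [Function.mem_support] at hp
      have hne : (expCoeff (fun n => -a n) L p.1) (π p.2 v) ≠ 0 := by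
        intro h0; apply hp; rw [h0, smul_zero, ite_self]
      rw [hQdef]
      simp only [Finset.coe_sort_coe, Set.Finite.coe_toFinset, Set.mem_setOf_eq]
      exact hne
    have e1 : ∀ i : ℤ, deltaNCoeff π L a N i (phiCoeff π L a N (j - i) v)
        = ∑ q ∈ Q, deltaNCoeff π L a N i
            (if ((N : ℤ) - 1) * q.2 - (N : ℤ) * q.1 = j - i then
              ((N : ℂ) ^ (q.2 - (q.1 : ℤ))) • (expCoeff (fun n => -a n) L q.1) (π q.2 v)
            else 0) := by
      intro i
      rw [hphi (j - i), deltaN_sum hnil₂]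
    have hsupp : ∀ q ∈ Q, (Function.support fun i : ℤ => deltaNCoeff π L a N i
        (if ((N : ℤ) - 1) * q.2 - (N : ℤ) * q.1 = j - i then
          ((N : ℂ) ^ (q.2 - (q.1 : ℤ))) • (expCoeff (fun n => -a n) L q.1) (π q.2 v)
        else 0)).Finite := by
      intro q _
      refine Set.Finite.subset
        (Set.finite_singleton (j - (((N : ℤ) - 1) * q.2 - (N : ℤ) * q.1))) ?_
      intro i hi
      simp only [Function.mem_support] at hi
      simp only [Set.mem_singleton_iff]
      by_contra hne
      apply hi
      rw [if_neg (fun hc => hne (by linarith)), deltaN_zero]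
    have e2 : ∑ᶠ i : ℤ, deltaNCoeff π L a N i (phiCoeff π L a N (j - i) v)
        = ∑ q ∈ Q, ∑ᶠ i : ℤ, deltaNCoeff π L a N i
            (if ((N : ℤ) - 1) * q.2 - (N : ℤ) * q.1 = j - i then
              ((N : ℂ) ^ (q.2 - (q.1 : ℤ))) • (expCoeff (fun n => -a n) L q.1) (π q.2 v)
            else 0) := by
      rw [finsum_congr e1]
      exact finsum_finsetSum_comm Q _ hsupp
    have hper : ∀ q ∈ Q, (∑ᶠ i : ℤ, deltaNCoeff π L a N i
          (if ((N : ℤ) - 1) * q.2 - (N : ℤ) * q.1 = j - i then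
            ((N : ℂ) ^ (q.2 - (q.1 : ℤ))) • (expCoeff (fun n => -a n) L q.1) (π q.2 v)
          else 0))
        = (if j + (q.1 : ℤ) ≤ 0 then
            expCoeff a L ((-(j + (q.1 : ℤ))).toNat)
              ((expCoeff (fun n => -a n) L q.1) (π q.2 v))
          else 0) := by
      rintro ⟨m, d⟩ -
      dsimp only
      have hside : ∀ i : ℤ, i ≠ j - (((N : ℤ) - 1) * d - (N : ℤ) * m) →
          deltaNCoeff π L a N i
            (if ((N : ℤ) - 1) * d - (N : ℤ) * m = j - i then
              ((N : ℂ) ^ (d - (m : ℤ))) • (expCoeff (fun n => -a n) L m) (π d v)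
            else 0) = 0 := by
        intro i hne
        rw [if_neg (fun hc => hne (by linarith)), deltaN_zero]
      rw [finsum_eq_single _ (j - (((N : ℤ) - 1) * d - (N : ℤ) * m)) hside]
      rw [if_pos (by ring)]
      by_cases hc : j + (m : ℤ) ≤ 0
      · rw [if_pos hc]
        have hm' : (((-(j + (m : ℤ))).toNat : ℤ)) = -(j + (m : ℤ)) :=
          Int.toNat_of_nonneg (by omega)
        rw [deltaN_single hproj hortho hL ((N : ℂ) ^ (d - (m : ℤ))) m d _ v
          ((-(j + (m : ℤ))).toNat) (by rw [hm']; ring)]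
        have hNne : (N : ℂ) ≠ 0 := Nat.cast_ne_zero.2 hN.ne'
        rw [← zpow_add₀ hNne]
        have : d - (m : ℤ) + ((m : ℤ) - d) = 0 := by ring
        rw [this, zpow_zero, one_smul]
      · rw [if_neg hc]
        refine deltaN_single_zero hproj hortho hL _ m d _ v ?_
        intro m'' hcon
        have key : (1 - (N : ℤ)) * (d - (m : ℤ)) - (-(j + (m : ℤ)))
            = j - (((N : ℤ) - 1) * d - (N : ℤ) * m) := by ring
        have hm'' : (m'' : ℤ) = -(j + (m : ℤ)) := by linarith [hcon, key]
        have h0 : (0 : ℤ) ≤ (m'' : ℤ) := Int.natCast_nonneg m''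
        omega
    rw [e2, Finset.sum_congr rfl hper]
    -- final step
    by_cases hj : 0 < j
    · rw [if_neg (by omega)]
      refine Finset.sum_eq_zero fun q _ => if_neg (by
        have := Int.natCast_nonneg q.1
        omega)
    · push_neg at hj
      set M := (-j).toNat with hM
      have hMz : (M : ℤ) = -j := Int.toNat_of_nonneg (by omega)
      set D := (hfin v).toFinset with hD
      have hQR : ∑ q ∈ Q, (if j + (q.1 : ℤ) ≤ 0 then
            expCoeff a L ((-(j + (q.1 : ℤ))).toNat)
              ((expCoeff (fun n => -a n) L q.1) (π q.2 v))
          else 0)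
          = ∑ q ∈ (Finset.range (M + 1)) ×ˢ D, (if j + (q.1 : ℤ) ≤ 0 then
            expCoeff a L ((-(j + (q.1 : ℤ))).toNat)
              ((expCoeff (fun n => -a n) L q.1) (π q.2 v))
          else 0) := by
        rw [Finset.sum_subset (Finset.subset_union_left :
            Q ⊆ Q ∪ (Finset.range (M + 1)) ×ˢ D) ?_]
        rw [← Finset.sum_subset (Finset.subset_union_right :
            (Finset.range (M + 1)) ×ˢ D ⊆ Q ∪ (Finset.range (M + 1)) ×ˢ D) ?_]
        · -- vanish off R
          intro x hx hxR
          rw [Finset.mem_product, not_and_or] at hxR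
          rcases hxR with hx1 | hx2
          · rw [Finset.mem_range] at hx1
            refine if_neg ?_
            omega
          · have h0 : π x.2 v = 0 := by
              rw [hD] at hx2
              rw [Set.Finite.mem_toFinset] at hx2
              simpa [Function.mem_support, not_not] using hx2
            rw [h0, map_zero, map_zero, ite_self]
        · -- vanish off Q
          intro x hx hxQ
          have h0 : expCoeff (fun n => -a n) L x.1 (π x.2 v) = 0 := by
            rw [hQdef] at hxQ
            rw [Set.Finite.mem_toFinset] at hxQ
            simpa [Set.mem_setOf_eq, not_not] using hxQ
          rw [h0, map_zero, ite_self]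
      rw [hQR, Finset.sum_product, Finset.sum_comm]
      have hinner : ∀ d ∈ D, ∑ m ∈ Finset.range (M + 1),
          (if j + (m : ℤ) ≤ 0 then
            expCoeff a L ((-(j + (m : ℤ))).toNat)
              ((expCoeff (fun n => -a n) L m) (π d v))
          else 0)
          = (if M = 0 then (1 : Module.End ℂ V) else 0) (π d v) := by
        intro d _
        have hterm : ∀ m ∈ Finset.range (M + 1),
            (if j + (m : ℤ) ≤ 0 then
              expCoeff a L ((-(j + (m : ℤ))).toNat)
                ((expCoeff (fun n => -a n) L m) (π d v))
            else 0)
            = (expCoeff a L (M - m) * expCoeff (fun n => -a n) L m) (π d v) := by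
          intro m hm
          rw [Finset.mem_range] at hm
          have hmM : m ≤ M := by omega
          have ht : (-(j + (m : ℤ))).toNat = M - m := by omega
          rw [if_pos (by omega), ht, Module.End.mul_apply]
        rw [Finset.sum_congr rfl hterm, ← LinearMap.sum_apply, expConv L a M]
      rw [Finset.sum_congr rfl hinner]
      by_cases hj0 : j = 0
      · have hM0 : M = 0 := by omega
        rw [if_pos hj0, hM0]
        simp only [↓reduceIte, Module.End.one_apply]
        rw [hD, ← finsum_eq_sum _ (hfin v)]
        exact hsum v
      · have hM0 : M ≠ 0 := by omega
        rw [if_neg hj0, if_neg hM0]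
        simp
  · -- Part 2 : Φ ∘ Δ
    set P := (hnil₂ v).toFinset with hPdef
    have hdelta : ∀ t : ℤ, deltaNCoeff π L a N t v = ∑ p ∈ P,
        (if (1 - (N : ℤ)) * p.2 - (p.1 : ℤ) = t then
          ((N : ℂ) ^ (-p.2)) • (expCoeff a L p.1) (π p.2 v)
        else 0) := by
      intro t
      rw [deltaNCoeff]
      refine finsum_eq_sum_of_support_subset _ ?_
      intro p hp
      simp only [Function.mem_support] at hp
      have hne : (expCoeff a L p.1) (π p.2 v) ≠ 0 := by
        intro h0; apply hp; rw [h0, smul_zero, ite_self]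
      rw [hPdef]
      simp only [Finset.coe_sort_coe, Set.Finite.coe_toFinset, Set.mem_setOf_eq]
      exact hne
    have e1 : ∀ i : ℤ, phiCoeff π L a N i (deltaNCoeff π L a N (j - i) v)
        = ∑ p ∈ P, phiCoeff π L a N i
            (if (1 - (N : ℤ)) * p.2 - (p.1 : ℤ) = j - i then
              ((N : ℂ) ^ (-p.2)) • (expCoeff a L p.1) (π p.2 v)
            else 0) := by
      intro i
      rw [hdelta (j - i), phi_sum hnil₁]
    have hsupp : ∀ p ∈ P, (Function.support fun i : ℤ => phiCoeff π L a N i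
        (if (1 - (N : ℤ)) * p.2 - (p.1 : ℤ) = j - i then
          ((N : ℂ) ^ (-p.2)) • (expCoeff a L p.1) (π p.2 v)
        else 0)).Finite := by
      intro p _
      refine Set.Finite.subset
        (Set.finite_singleton (j - ((1 - (N : ℤ)) * p.2 - (p.1 : ℤ)))) ?_
      intro i hi
      simp only [Function.mem_support] at hi
      simp only [Set.mem_singleton_iff]
      by_contra hne
      apply hi
      rw [if_neg (fun hc => hne (by linarith)), phi_zero]
    have e2 : ∑ᶠ i : ℤ, phiCoeff π L a N i (deltaNCoeff π L a N (j - i) v)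
        = ∑ p ∈ P, ∑ᶠ i : ℤ, phiCoeff π L a N i
            (if (1 - (N : ℤ)) * p.2 - (p.1 : ℤ) = j - i then
              ((N : ℂ) ^ (-p.2)) • (expCoeff a L p.1) (π p.2 v)
            else 0) := by
      rw [finsum_congr e1]
      exact finsum_finsetSum_comm P _ hsupp
    have hNneZ : (N : ℤ) ≠ 0 := by exact_mod_cast hN.ne'
    have hNne : (N : ℂ) ≠ 0 := Nat.cast_ne_zero.2 hN.ne'
    by_cases hjd : ∃ M2 : ℕ, j = -(N : ℤ) * M2
    · obtain ⟨M2, hM2⟩ := hjd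
      have hper : ∀ p ∈ P, (∑ᶠ i : ℤ, phiCoeff π L a N i
            (if (1 - (N : ℤ)) * p.2 - (p.1 : ℤ) = j - i then
              ((N : ℂ) ^ (-p.2)) • (expCoeff a L p.1) (π p.2 v)
            else 0))
          = (if p.1 ≤ M2 then
              ((N : ℂ) ^ (-(M2 : ℤ))) •
                expCoeff (fun n => -a n) L (M2 - p.1) ((expCoeff a L p.1) (π p.2 v))
            else 0) := by
        rintro ⟨m, e⟩ -
        dsimp only
        have hside : ∀ i : ℤ, i ≠ j - ((1 - (N : ℤ)) * e - (m : ℤ)) →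
            phiCoeff π L a N i
              (if (1 - (N : ℤ)) * e - (m : ℤ) = j - i then
                ((N : ℂ) ^ (-e)) • (expCoeff a L m) (π e v)
              else 0) = 0 := by
          intro i hne
          rw [if_neg (fun hc => hne (by linarith)), phi_zero]
        rw [finsum_eq_single _ (j - ((1 - (N : ℤ)) * e - (m : ℤ))) hside]
        rw [if_pos (by ring)]
        by_cases hc : m ≤ M2
        · rw [if_pos hc]
          rw [phi_single hproj hortho hL hN ((N : ℂ) ^ (-e)) m e _ v (M2 - m)
            (by rw [hM2]; push_cast [Nat.cast_sub hc]; ring)]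
          rw [← zpow_add₀ hNne,
            show -e + (e - (m : ℤ) - ((M2 - m : ℕ) : ℤ)) = -(M2 : ℤ) by
              push_cast [Nat.cast_sub hc]; ring]
        · rw [if_neg hc]
          refine phi_single_zero hproj hortho hL _ m e _ v ?_
          intro m'' hcon
          have key : ((N : ℤ) - 1) * (e - (m : ℤ)) - (N : ℤ) * (m'' : ℤ)
              - (j - ((1 - (N : ℤ)) * e - (m : ℤ)))
              = -(N : ℤ) * ((m : ℤ) + (m'' : ℤ)) - j := by ring
          have hj2 : j = -(N : ℤ) * ((m : ℤ) + (m'' : ℤ)) := by linarith [hcon, key]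
          have : (N : ℤ) * (M2 : ℤ) = (N : ℤ) * ((m : ℤ) + (m'' : ℤ)) := by
            rw [hM2] at hj2; linarith
          have hMm : (M2 : ℤ) = (m : ℤ) + (m'' : ℤ) := mul_left_cancel₀ hNneZ this
          omega
      rw [e2, Finset.sum_congr rfl hper]
      have hfactor : ∑ p ∈ P, (if p.1 ≤ M2 then
            ((N : ℂ) ^ (-(M2 : ℤ))) •
              expCoeff (fun n => -a n) L (M2 - p.1) ((expCoeff a L p.1) (π p.2 v))
          else 0)
          = ((N : ℂ) ^ (-(M2 : ℤ))) • ∑ p ∈ P, (if p.1 ≤ M2 then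
            expCoeff (fun n => -a n) L (M2 - p.1) ((expCoeff a L p.1) (π p.2 v))
          else 0) := by
        rw [Finset.smul_sum]
        refine Finset.sum_congr rfl fun p _ => ?_
        split_ifs
        · rfl
        · rw [smul_zero]
      rw [hfactor]
      set D := (hfin v).toFinset with hD
      have hPR : ∑ p ∈ P, (if p.1 ≤ M2 then
            expCoeff (fun n => -a n) L (M2 - p.1) ((expCoeff a L p.1) (π p.2 v))
          else 0)
          = ∑ p ∈ (Finset.range (M2 + 1)) ×ˢ D, (if p.1 ≤ M2 then
            expCoeff (fun n => -a n) L (M2 - p.1) ((expCoeff a L p.1) (π p.2 v))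
          else 0) := by
        rw [Finset.sum_subset (Finset.subset_union_left :
            P ⊆ P ∪ (Finset.range (M2 + 1)) ×ˢ D) ?_]
        rw [← Finset.sum_subset (Finset.subset_union_right :
            (Finset.range (M2 + 1)) ×ˢ D ⊆ P ∪ (Finset.range (M2 + 1)) ×ˢ D) ?_]
        · intro x hx hxR
          rw [Finset.mem_product, not_and_or] at hxR
          rcases hxR with hx1 | hx2
          · rw [Finset.mem_range] at hx1
            exact if_neg (by omega)
          · have h0 : π x.2 v = 0 := by
              rw [hD] at hx2
              rw [Set.Finite.mem_toFinset] at hx2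
              simpa [Function.mem_support, not_not] using hx2
            rw [h0, map_zero, map_zero, ite_self]
        · intro x hx hxP
          have h0 : expCoeff a L x.1 (π x.2 v) = 0 := by
            rw [hPdef] at hxP
            rw [Set.Finite.mem_toFinset] at hxP
            simpa [Set.mem_setOf_eq, not_not] using hxP
          rw [h0, map_zero, ite_self]
      rw [hPR, Finset.sum_product, Finset.sum_comm]
      have hfun : (fun n => -(fun n => -a n) n) = a := by funext n; simp
      have hconv := expConv (V := V) L (fun n => -a n) M2
      rw [hfun] at hconv
      have hinner : ∀ d ∈ D, ∑ m ∈ Finset.range (M2 + 1),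
          (if m ≤ M2 then
            expCoeff (fun n => -a n) L (M2 - m) ((expCoeff a L m) (π d v))
          else 0)
          = (if M2 = 0 then (1 : Module.End ℂ V) else 0) (π d v) := by
        intro d _
        have hterm : ∀ m ∈ Finset.range (M2 + 1),
            (if m ≤ M2 then
              expCoeff (fun n => -a n) L (M2 - m) ((expCoeff a L m) (π d v))
            else 0)
            = (expCoeff (fun n => -a n) L (M2 - m) * expCoeff a L m) (π d v) := by
          intro m hm
          rw [Finset.mem_range] at hm
          rw [if_pos (by omega), Module.End.mul_apply]
        rw [Finset.sum_congr rfl hterm, ← LinearMap.sum_apply, hconv]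
      rw [Finset.sum_congr rfl hinner]
      by_cases hj0 : j = 0
      · have hM0 : M2 = 0 := by
          rcases Nat.eq_zero_or_pos M2 with h | h
          · exact h
          · exfalso
            rw [hj0] at hM2
            have : (N : ℤ) * (M2 : ℤ) = 0 := by linarith
            rcases mul_eq_zero.1 this with h' | h'
            · exact hNneZ h'
            · simp only [Int.natCast_eq_zero] at h'
              omega
        rw [if_pos hj0, hM0]
        simp only [↓reduceIte, Module.End.one_apply]
        rw [hD, ← finsum_eq_sum _ (hfin v), hsum v]
        simp
      · have hM0 : M2 ≠ 0 := by
          intro h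
          apply hj0
          rw [hM2, h]
          simp
        rw [if_neg hj0, if_neg hM0]
        simp
    · -- no suitable M2 : everything vanishes, and j ≠ 0
      have hper0 : ∀ p ∈ P, (∑ᶠ i : ℤ, phiCoeff π L a N i
            (if (1 - (N : ℤ)) * p.2 - (p.1 : ℤ) = j - i then
              ((N : ℂ) ^ (-p.2)) • (expCoeff a L p.1) (π p.2 v)
            else 0)) = 0 := by
        rintro ⟨m, e⟩ -
        dsimp only
        have hside : ∀ i : ℤ, i ≠ j - ((1 - (N : ℤ)) * e - (m : ℤ)) →
            phiCoeff π L a N i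
              (if (1 - (N : ℤ)) * e - (m : ℤ) = j - i then
                ((N : ℂ) ^ (-e)) • (expCoeff a L m) (π e v)
              else 0) = 0 := by
          intro i hne
          rw [if_neg (fun hc => hne (by linarith)), phi_zero]
        rw [finsum_eq_single _ (j - ((1 - (N : ℤ)) * e - (m : ℤ))) hside]
        rw [if_pos (by ring)]
        refine phi_single_zero hproj hortho hL _ m e _ v ?_
        intro m'' hcon
        apply hjd
        refine ⟨m + m'', ?_⟩
        have key : ((N : ℤ) - 1) * (e - (m : ℤ)) - (N : ℤ) * (m'' : ℤ)
            - (j - ((1 - (N : ℤ)) * e - (m : ℤ)))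
            = -(N : ℤ) * ((m : ℤ) + (m'' : ℤ)) - j := by ring
        push_cast
        linarith [hcon, key]
      rw [e2, Finset.sum_congr rfl hper0, Finset.sum_const_zero]
      rw [if_neg (fun h => hjd ⟨0, by rw [h]; simp⟩)]
end
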